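/- Let H0 and H1 be complex Hilbert spaces and let A0 on H0 and A1 on H1 be bounded self-adjoint operators whose spectra are disjoint, with d := dist(spectrum(A0), spectrum(A1)) > 0. Assume in addition that the convex hull of the real spectrum of A0 is disjoint from the spectrum of A1, or the spectrum of A0 is disjoint from the convex hull of the real spectrum of A1 (this covers both the case of subordinated spectra and the case where one spectrum lies in a finite gap of the other). Let B : H1 → H0 and C : H0 → H1 be bounded operators such that √(‖B‖·‖C‖) < d/2. Then there exists a unique bounded operator K : H0 → H1 with 2·‖B‖·‖K‖ ≤ d satisfying the Riccati equation K A0 − A1 K + K B K = C; moreover this K satisfies ‖K‖ ≤ ‖C‖ / (d/2 + √(d²/4 − ‖B‖·‖C‖)). (Bounded-operator version of Theorem 4.7 (ii) of the paper.) -/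

import Mathlib

set_option maxHeartbeats 1600000

open ContinuousLinearMap

theorem sylv_abstract {H0 H1 : Type*}
    [NormedAddCommGroup H0] [InnerProductSpace ℂ H0] [CompleteSpace H0]
    [NormedAddCommGroup H1] [InnerProductSpace ℂ H1] [CompleteSpace H1]
    (A0 : H0 →L[ℂ] H0) (A1 : H1 →L[ℂ] H1) (d : ℝ) (hd0 : 0 < d)
    (c r : ℝ) (hr : 0 ≤ r)
    (h0 : ‖A0 - algebraMap ℝ _ c‖ ≤ r)
    (N : H1 →L[ℂ] H1)
    (hN1 : N * (A1 - algebraMap ℝ _ c) = 1)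
    (hN2 : (A1 - algebraMap ℝ _ c) * N = 1)
    (hNn : ‖N‖ ≤ (r + d)⁻¹) (D : H0 →L[ℂ] H1) :
    (∃ L : H0 →L[ℂ] H1, L ∘L A0 - A1 ∘L L = D) ∧
      ∀ L : H0 →L[ℂ] H1, L ∘L A0 - A1 ∘L L = D → d * ‖L‖ ≤ ‖D‖ := by
  set M0 : H0 →L[ℂ] H0 := A0 - algebraMap ℝ _ c with hM0
  set M1 : H1 →L[ℂ] H1 := A1 - algebraMap ℝ _ c with hM1
  have hrd : (0:ℝ) < r + d := by linarith
  have key : ∀ L : H0 →L[ℂ] H1, L ∘L A0 - A1 ∘L L = L ∘L M0 - M1 ∘L L := by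
    intro L
    have hc : L ∘L (algebraMap ℝ (H0 →L[ℂ] H0) c) = (algebraMap ℝ (H1 →L[ℂ] H1) c) ∘L L := by
      ext x
      simp [Algebra.algebraMap_eq_smul_one]
    simp only [hM0, hM1, comp_sub, sub_comp]
    rw [hc]; abel
  have hinv : ∀ X : H0 →L[ℂ] H1, M1 ∘L (N ∘L X) = X := by
    intro X
    rw [← comp_assoc, ← mul_def, hN2, one_def, id_comp]
  have hinv' : ∀ X : H0 →L[ℂ] H1, N ∘L (M1 ∘L X) = X := by
    intro X
    rw [← comp_assoc, ← mul_def, hN1, one_def, id_comp]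
  set f : (H0 →L[ℂ] H1) → (H0 →L[ℂ] H1) := fun L => N ∘L (L ∘L M0 - D) with hf
  have hdiff : ∀ L L' : H0 →L[ℂ] H1,
      f L - f L' = N ∘L ((L - L') ∘L M0) := by
    intro L L'
    simp only [hf, ← comp_sub]
    rw [sub_sub_sub_cancel_right, ← sub_comp]
  have hNM : ‖N‖ * ‖M0‖ ≤ (r+d)⁻¹ * r := by
    gcongr
  have hq1 : (r+d)⁻¹ * r < 1 := by rw [inv_mul_lt_iff₀ hrd]; linarith
  have hlip : LipschitzWith (‖N‖₊ * ‖M0‖₊) f := by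
    apply LipschitzWith.of_dist_le_mul
    intro L L'
    simp only [dist_eq_norm]
    rw [hdiff]
    calc ‖N ∘L ((L - L') ∘L M0)‖ ≤ ‖N‖ * ‖(L - L') ∘L M0‖ := opNorm_comp_le _ _
      _ ≤ ‖N‖ * (‖L - L'‖ * ‖M0‖) :=
          mul_le_mul_of_nonneg_left (opNorm_comp_le _ _) (norm_nonneg N)
      _ = ↑(‖N‖₊ * ‖M0‖₊) * ‖L - L'‖ := by push_cast; ring
  have hq : (‖N‖₊ * ‖M0‖₊ : NNReal) < 1 := by
    rw [← NNReal.coe_lt_coe]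
    push_cast
    exact lt_of_le_of_lt hNM hq1
  have hcontr : ContractingWith (‖N‖₊ * ‖M0‖₊) f := ⟨hq, hlip⟩
  constructor
  · set L := hcontr.fixedPoint f with hLdef
    have hfix : N ∘L (L ∘L M0 - D) = L := hcontr.fixedPoint_isFixedPt
    refine ⟨L, ?_⟩
    rw [key]
    calc L ∘L M0 - M1 ∘L L
        = L ∘L M0 - M1 ∘L (N ∘L (L ∘L M0 - D)) := by rw [hfix]
      _ = L ∘L M0 - (L ∘L M0 - D) := by rw [hinv]
      _ = D := by abel
  · intro L hL
    rw [key] at hL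
    have hM1L : M1 ∘L L = L ∘L M0 - D := by
      rw [← hL]; abel
    have h4 : L = N ∘L (L ∘L M0 - D) := by
      rw [← hM1L, hinv']
    have h5 : ‖L‖ ≤ (r+d)⁻¹ * (r * ‖L‖ + ‖D‖) := by
      calc ‖L‖ = ‖N ∘L (L ∘L M0 - D)‖ := by rw [← h4]
        _ ≤ ‖N‖ * ‖L ∘L M0 - D‖ := opNorm_comp_le _ _
        _ ≤ ‖N‖ * (‖L ∘L M0‖ + ‖D‖) :=
            mul_le_mul_of_nonneg_left (norm_sub_le _ _) (norm_nonneg N)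
        _ ≤ (r+d)⁻¹ * (r * ‖L‖ + ‖D‖) := by
            gcongr
            · calc ‖L ∘L M0‖ ≤ ‖L‖ * ‖M0‖ := opNorm_comp_le _ _
                _ ≤ ‖L‖ * r := by gcongr
                _ = r * ‖L‖ := mul_comm _ _
    have h6 : (r+d) * ‖L‖ ≤ r * ‖L‖ + ‖D‖ := by
      have := mul_le_mul_of_nonneg_left h5 hrd.le
      rwa [mul_inv_cancel_left₀ hrd.ne'] at this
    nlinarith [norm_nonneg L]

theorem gap_setup {H0 H1 : Type*}
    [NormedAddCommGroup H0] [InnerProductSpace ℂ H0] [CompleteSpace H0] [Nontrivial H0]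
    [NormedAddCommGroup H1] [InnerProductSpace ℂ H1] [CompleteSpace H1]
    (A0 : H0 →L[ℂ] H0) (A1 : H1 →L[ℂ] H1)
    (hA0 : IsSelfAdjoint A0) (hA1 : IsSelfAdjoint A1)
    (d : ℝ) (hd0 : 0 < d)
    (hdd : ∀ μ ∈ spectrum ℂ A0, ∀ ν ∈ spectrum ℂ A1, d ≤ dist μ ν)
    (hgap1 : Disjoint (convexHull ℝ (Complex.re '' spectrum ℂ A0))
      (Complex.re '' spectrum ℂ A1)) :
    ∃ (c r : ℝ), 0 ≤ r ∧ ‖A0 - algebraMap ℝ _ c‖ ≤ r ∧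
      ∃ N : H1 →L[ℂ] H1, N * (A1 - algebraMap ℝ _ c) = 1 ∧
        (A1 - algebraMap ℝ _ c) * N = 1 ∧ ‖N‖ ≤ (r + d)⁻¹ := by
  have h2 : Complex.re '' spectrum ℂ A0 = spectrum ℝ A0 := hA0.spectrumRestricts.image
  have h2' : Complex.re '' spectrum ℂ A1 = spectrum ℝ A1 := hA1.spectrumRestricts.image
  have h3 : (algebraMap ℝ ℂ) '' spectrum ℝ A0 = spectrum ℂ A0 :=
    hA0.spectrumRestricts.algebraMap_image
  have h3' : (algebraMap ℝ ℂ) '' spectrum ℝ A1 = spectrum ℂ A1 :=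
    hA1.spectrumRestricts.algebraMap_image
  set s0 := spectrum ℝ A0 with hs0
  set s1 := spectrum ℝ A1 with hs1
  -- real distance bound
  have hddR : ∀ x ∈ s0, ∀ y ∈ s1, d ≤ |x - y| := by
    intro x hx y hy
    have hxC : (x:ℂ) ∈ spectrum ℂ A0 := h3 ▸ ⟨x, hx, rfl⟩
    have hyC : (y:ℂ) ∈ spectrum ℂ A1 := h3' ▸ ⟨y, hy, rfl⟩
    have := hdd _ hxC _ hyC
    rwa [Complex.isometry_ofReal.dist_eq, Real.dist_eq] at this
  have hne : s0.Nonempty := by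
    rw [← h2]
    exact ((spectrum.nonempty A0).image _)
  have hcpt : IsCompact s0 := by
    rw [← h2]
    exact (spectrum.isCompact A0).image Complex.continuous_re
  set a := sInf s0 with ha
  set b := sSup s0 with hb
  have hamem : a ∈ s0 := hcpt.sInf_mem hne
  have hbmem : b ∈ s0 := hcpt.sSup_mem hne
  have hbddb : BddBelow s0 := hcpt.bddBelow
  have hbdda : BddAbove s0 := hcpt.bddAbove
  have hab : a ≤ b := csInf_le_csSup hne hbddb hbdda
  have hbound : ∀ x ∈ s0, a ≤ x ∧ x ≤ b := fun x hx => ⟨csInf_le hbddb hx, le_csSup hbdda hx⟩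
  set c := (a + b)/2 with hc
  set r := (b - a)/2 with hrdef
  have hr : 0 ≤ r := by rw [hrdef]; linarith
  refine ⟨c, r, hr, ?_, ?_⟩
  · have hA0' : A0 - algebraMap ℝ _ c = cfc (fun x : ℝ => x - c) A0 := by
      rw [cfc_sub _ _ A0, cfc_id' ℝ A0, cfc_const c A0]
    rw [hA0']
    apply norm_cfc_le hr
    intro x hx
    obtain ⟨h1x, h2x⟩ := hbound x hx
    rw [Real.norm_eq_abs, abs_le]
    constructor <;> [skip; skip] <;> · rw [hc, hrdef] at *; linarith
  · -- spectrum of A1 is far from c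
    have hfar : ∀ y ∈ s1, r + d ≤ |y - c| := by
      intro y hy
      have hyIcc : y ∉ Set.Icc a b := by
        intro hmem
        have hsub : Set.Icc a b ⊆ convexHull ℝ (Complex.re '' spectrum ℂ A0) := by
          rw [h2]
          intro z hz
          rw [← segment_eq_Icc hab] at hz
          exact segment_subset_convexHull hamem hbmem hz
        exact Set.disjoint_left.mp hgap1 (hsub hmem) (h2' ▸ hy)
      have hda : d ≤ |a - y| := hddR a hamem y hy
      have hdb : d ≤ |b - y| := hddR b hbmem y hy
      rw [Set.mem_Icc, not_and_or, not_le, not_le] at hyIcc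
      rcases hyIcc with hlt | hgt
      · rw [abs_sub_comm, abs_of_pos (by rw [hc]; linarith)]
        have hda' : d ≤ a - y := by rwa [abs_of_pos (by linarith)] at hda
        rw [hc, hrdef]; linarith
      · rw [abs_of_pos (by rw [hc]; linarith)]
        have hdb' : d ≤ y - b := by rwa [abs_sub_comm, abs_of_pos (by linarith)] at hdb
        rw [hc, hrdef]; linarith
    have hrd : (0:ℝ) < r + d := by linarith
    have hne0 : ∀ y ∈ s1, y - c ≠ 0 := by
      intro y hy h
      have := hfar y hy
      rw [h, abs_zero] at this; linarith
    have hcont : ContinuousOn (fun x : ℝ => (x - c)⁻¹) s1 :=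
      ContinuousOn.inv₀ (by fun_prop) hne0
    have hA1' : A1 - algebraMap ℝ _ c = cfc (fun x : ℝ => x - c) A1 := by
      rw [cfc_sub _ _ A1, cfc_id' ℝ A1, cfc_const c A1]
    refine ⟨cfc (fun x : ℝ => (x - c)⁻¹) A1, ?_, ?_, ?_⟩
    · rw [hA1', ← cfc_mul _ _ A1 hcont (by fun_prop), ← cfc_one (R := ℝ) A1]
      apply cfc_congr
      intro y hy
      exact inv_mul_cancel₀ (hne0 y hy)
    · rw [hA1', ← cfc_mul _ _ A1 (by fun_prop) hcont, ← cfc_one (R := ℝ) A1]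
      apply cfc_congr
      intro y hy
      exact mul_inv_cancel₀ (hne0 y hy)
    · apply norm_cfc_le (by positivity)
      intro y hy
      rw [Real.norm_eq_abs, abs_inv]
      rw [inv_le_inv₀ (lt_of_lt_of_le hrd (hfar y hy)) hrd]
      exact hfar y hy

theorem riccati_of_sylvester {H0 H1 : Type*}
    [NormedAddCommGroup H0] [InnerProductSpace ℂ H0] [CompleteSpace H0]
    [NormedAddCommGroup H1] [InnerProductSpace ℂ H1] [CompleteSpace H1]
    (A0 : H0 →L[ℂ] H0) (A1 : H1 →L[ℂ] H1) (d : ℝ) (hd0 : 0 < d)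
    (B : H1 →L[ℂ] H0) (C : H0 →L[ℂ] H1)
    (hS : ∀ D : H0 →L[ℂ] H1, (∃ L : H0 →L[ℂ] H1, L ∘L A0 - A1 ∘L L = D) ∧
      ∀ L : H0 →L[ℂ] H1, L ∘L A0 - A1 ∘L L = D → d * ‖L‖ ≤ ‖D‖)
    (hBC : ‖B‖ * ‖C‖ < d ^ 2 / 4) :
    (∃! K : H0 →L[ℂ] H1,
        2 * ‖B‖ * ‖K‖ ≤ d ∧ K ∘L A0 - A1 ∘L K + (K ∘L B) ∘L K = C) ∧
      ∀ K : H0 →L[ℂ] H1,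
        2 * ‖B‖ * ‖K‖ ≤ d → K ∘L A0 - A1 ∘L K + (K ∘L B) ∘L K = C →
          ‖K‖ ≤ ‖C‖ / (d / 2 + Real.sqrt (d ^ 2 / 4 - ‖B‖ * ‖C‖)) := by
  set bb := ‖B‖ with hbb
  have hb0 : 0 ≤ bb := norm_nonneg B
  set s := Real.sqrt (d ^ 2 / 4 - bb * ‖C‖) with hsdef
  have hs2 : s ^ 2 = d ^ 2 / 4 - bb * ‖C‖ := Real.sq_sqrt (by nlinarith)
  have hs0 : 0 < s := Real.sqrt_pos.mpr (by nlinarith)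
  have hsd : s ≤ d / 2 := by
    nlinarith [Real.sqrt_nonneg (d ^ 2 / 4 - bb * ‖C‖), mul_nonneg hb0 (norm_nonneg C)]
  have hds : (0:ℝ) < d / 2 + s := by linarith
  set ρ := ‖C‖ / (d / 2 + s) with hρdef
  have hρ0 : 0 ≤ ρ := div_nonneg (norm_nonneg C) hds.le
  have hρC : (d / 2 + s) * ρ = ‖C‖ := by
    rw [hρdef]; field_simp
  have hbρ : bb * ρ = d / 2 - s := by
    rw [hρdef, ← mul_div_assoc, div_eq_iff hds.ne']
    nlinarith
  have hdρ : d * ρ = ‖C‖ + bb * ρ ^ 2 := by nlinarith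
  have hquad : ∀ K : H0 →L[ℂ] H1, ‖(K ∘L B) ∘L K‖ ≤ bb * ‖K‖ ^ 2 := by
    intro K
    calc ‖(K ∘L B) ∘L K‖ ≤ ‖K ∘L B‖ * ‖K‖ := opNorm_comp_le _ _
      _ ≤ ‖K‖ * ‖B‖ * ‖K‖ := by gcongr; exact opNorm_comp_le _ _
      _ = bb * ‖K‖ ^ 2 := by rw [hbb]; ring
  have hquaddiff : ∀ K K' : H0 →L[ℂ] H1,
      ‖(K ∘L B) ∘L K - (K' ∘L B) ∘L K'‖ ≤ bb * (‖K‖ + ‖K'‖) * ‖K - K'‖ := by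
    intro K K'
    have hsplit : (K ∘L B) ∘L K - (K' ∘L B) ∘L K'
        = ((K - K') ∘L B) ∘L K + (K' ∘L B) ∘L (K - K') := by
      simp only [sub_comp, comp_sub]
      abel
    rw [hsplit]
    calc ‖((K - K') ∘L B) ∘L K + (K' ∘L B) ∘L (K - K')‖
        ≤ ‖((K - K') ∘L B) ∘L K‖ + ‖(K' ∘L B) ∘L (K - K')‖ := norm_add_le _ _
      _ ≤ ‖K - K'‖ * ‖B‖ * ‖K‖ + ‖K'‖ * ‖B‖ * ‖K - K'‖ := by
          gcongr
          · exact (opNorm_comp_le _ _).trans (by gcongr; exact opNorm_comp_le _ _)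
          · exact (opNorm_comp_le _ _).trans (by gcongr; exact opNorm_comp_le _ _)
      _ = bb * (‖K‖ + ‖K'‖) * ‖K - K'‖ := by rw [hbb]; ring
  have sylvdiff : ∀ L L' : H0 →L[ℂ] H1,
      (L - L') ∘L A0 - A1 ∘L (L - L')
        = (L ∘L A0 - A1 ∘L L) - (L' ∘L A0 - A1 ∘L L') := by
    intro L L'
    simp only [sub_comp, comp_sub]
    abel
  have solbound : ∀ K : H0 →L[ℂ] H1, 2 * bb * ‖K‖ ≤ d →
      K ∘L A0 - A1 ∘L K + (K ∘L B) ∘L K = C → ‖K‖ ≤ ρ := by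
    intro K hK heq
    have heq' : K ∘L A0 - A1 ∘L K = C - (K ∘L B) ∘L K := by
      rw [← heq]; abel
    have h1 : d * ‖K‖ ≤ ‖C - (K ∘L B) ∘L K‖ := (hS _).2 K heq'
    have h2 : ‖C - (K ∘L B) ∘L K‖ ≤ ‖C‖ + bb * ‖K‖ ^ 2 :=
      (norm_sub_le _ _).trans (by gcongr ‖C‖ + ?_; exact hquad K)
    by_contra hcon
    push_neg at hcon
    have hx : d * ‖K‖ ≤ ‖C‖ + bb * ‖K‖ ^ 2 := h1.trans h2
    nlinarith [hcon, hs0, norm_nonneg K]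
  have diffzero : ∀ K K' : H0 →L[ℂ] H1,
      K ∘L A0 - A1 ∘L K + (K ∘L B) ∘L K = C →
      K' ∘L A0 - A1 ∘L K' + (K' ∘L B) ∘L K' = C →
      ‖K‖ ≤ ρ → ‖K'‖ ≤ ρ → K = K' := by
    intro K K' h1 h2 hK hK'
    have e1 : K ∘L A0 - A1 ∘L K = C - (K ∘L B) ∘L K := by rw [← h1]; abel
    have e2 : K' ∘L A0 - A1 ∘L K' = C - (K' ∘L B) ∘L K' := by rw [← h2]; abel
    have e3 : (K - K') ∘L A0 - A1 ∘L (K - K')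
        = (K' ∘L B) ∘L K' - (K ∘L B) ∘L K := by
      rw [sylvdiff, e1, e2]; abel
    have h4 : d * ‖K - K'‖ ≤ ‖(K' ∘L B) ∘L K' - (K ∘L B) ∘L K‖ := (hS _).2 _ e3
    have h5 : ‖(K' ∘L B) ∘L K' - (K ∘L B) ∘L K‖ ≤ bb * (‖K'‖ + ‖K‖) * ‖K' - K‖ :=
      hquaddiff K' K
    have h6 : bb * (‖K'‖ + ‖K‖) ≤ d - 2 * s := by
      have : bb * (‖K'‖ + ‖K‖) ≤ bb * (ρ + ρ) := by gcongr
      nlinarith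
    have h7 : ‖K' - K‖ = ‖K - K'‖ := norm_sub_rev _ _
    have h8 : d * ‖K - K'‖ ≤ (d - 2 * s) * ‖K - K'‖ := by
      calc d * ‖K - K'‖ ≤ bb * (‖K'‖ + ‖K‖) * ‖K' - K‖ := h4.trans h5
        _ = bb * (‖K'‖ + ‖K‖) * ‖K - K'‖ := by rw [h7]
        _ ≤ (d - 2 * s) * ‖K - K'‖ := by
            apply mul_le_mul_of_nonneg_right h6 (norm_nonneg _)
    have h9 : ‖K - K'‖ = 0 := by nlinarith [norm_nonneg (K - K')]
    rw [← sub_eq_zero]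
    exact norm_eq_zero.mp h9
  -- contraction on closed ball
  have hball : IsClosed (Metric.closedBall (0:H0 →L[ℂ] H1) ρ) := Metric.isClosed_closedBall
  haveI : CompleteSpace (Metric.closedBall (0:H0 →L[ℂ] H1) ρ) := hball.completeSpace_coe
  haveI : Nonempty (Metric.closedBall (0:H0 →L[ℂ] H1) ρ) := ⟨⟨0, by simp [hρ0]⟩⟩
  have memball : ∀ K : H0 →L[ℂ] H1, ‖K‖ ≤ ρ → ∀ L : H0 →L[ℂ] H1,
      L ∘L A0 - A1 ∘L L = C - (K ∘L B) ∘L K → ‖L‖ ≤ ρ := by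
    intro K hK L hL
    have h1 : d * ‖L‖ ≤ ‖C - (K ∘L B) ∘L K‖ := (hS _).2 L hL
    have h2 : ‖C - (K ∘L B) ∘L K‖ ≤ ‖C‖ + bb * ρ ^ 2 := by
      refine (norm_sub_le _ _).trans ?_
      have := (hquad K).trans (by gcongr : bb * ‖K‖ ^ 2 ≤ bb * ρ ^ 2)
      linarith
    nlinarith
  set Φ : Metric.closedBall (0:H0 →L[ℂ] H1) ρ → Metric.closedBall (0:H0 →L[ℂ] H1) ρ :=
    fun K =>
    ⟨Classical.choose (hS (C - (K.1 ∘L B) ∘L K.1)).1, by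
      rw [Metric.mem_closedBall, dist_zero_right]
      refine memball K.1 ?_ _ (Classical.choose_spec (hS (C - (K.1 ∘L B) ∘L K.1)).1)
      have := K.2
      rwa [Metric.mem_closedBall, dist_zero_right] at this⟩ with hΦ
  have hΦspec : ∀ K : Metric.closedBall (0:H0 →L[ℂ] H1) ρ,
      (Φ K).1 ∘L A0 - A1 ∘L (Φ K).1 = C - (K.1 ∘L B) ∘L K.1 := fun K =>
    Classical.choose_spec (hS (C - (K.1 ∘L B) ∘L K.1)).1
  have hnorms : ∀ K : Metric.closedBall (0:H0 →L[ℂ] H1) ρ, ‖K.1‖ ≤ ρ := by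
    intro K
    have := K.2
    rwa [Metric.mem_closedBall, dist_zero_right] at this
  have hΦlip : ∀ K K' : Metric.closedBall (0:H0 →L[ℂ] H1) ρ,
      d * ‖(Φ K).1 - (Φ K').1‖ ≤ (d - 2*s) * ‖K.1 - K'.1‖ := by
    intro K K'
    have e3 : ((Φ K).1 - (Φ K').1) ∘L A0 - A1 ∘L ((Φ K).1 - (Φ K').1)
        = (K'.1 ∘L B) ∘L K'.1 - (K.1 ∘L B) ∘L K.1 := by
      rw [sylvdiff, hΦspec, hΦspec]; abel
    have h4 := (hS _).2 _ e3
    have h5 := hquaddiff K'.1 K.1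
    have h6 : bb * (‖K'.1‖ + ‖K.1‖) ≤ d - 2 * s := by
      have : bb * (‖K'.1‖ + ‖K.1‖) ≤ bb * (ρ + ρ) := by
        gcongr <;> [exact hnorms K'; exact hnorms K]
      nlinarith
    calc d * ‖(Φ K).1 - (Φ K').1‖ ≤ ‖(K'.1 ∘L B) ∘L K'.1 - (K.1 ∘L B) ∘L K.1‖ := h4
      _ ≤ bb * (‖K'.1‖ + ‖K.1‖) * ‖K'.1 - K.1‖ := h5
      _ = bb * (‖K'.1‖ + ‖K.1‖) * ‖K.1 - K'.1‖ := by rw [norm_sub_rev]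
      _ ≤ (d - 2*s) * ‖K.1 - K'.1‖ := mul_le_mul_of_nonneg_right h6 (norm_nonneg _)
  set q : NNReal := ⟨(d - 2*s)/d, by apply div_nonneg <;> linarith⟩ with hqdef
  have hqcoe : (q : ℝ) = (d - 2*s)/d := rfl
  have hcontr : ContractingWith q Φ := by
    constructor
    · rw [← NNReal.coe_lt_coe, hqcoe]
      push_cast
      rw [div_lt_one hd0]
      linarith
    · apply LipschitzWith.of_dist_le_mul
      intro K K'
      rw [Subtype.dist_eq, dist_eq_norm, Subtype.dist_eq, dist_eq_norm, hqcoe]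
      rw [div_mul_eq_mul_div, le_div_iff₀ hd0]
      calc ‖(Φ K).1 - (Φ K').1‖ * d = d * ‖(Φ K).1 - (Φ K').1‖ := mul_comm _ _
        _ ≤ (d - 2*s) * ‖K.1 - K'.1‖ := hΦlip K K'
  set K0 := hcontr.fixedPoint Φ with hK0
  have hfix : Φ K0 = K0 := hcontr.fixedPoint_isFixedPt
  have hfixv : (Φ K0).1 = K0.1 := congrArg Subtype.val hfix
  have hK0eq : K0.1 ∘L A0 - A1 ∘L K0.1 + (K0.1 ∘L B) ∘L K0.1 = C := by
    have := hΦspec K0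
    rw [hfixv] at this
    rw [this]; abel
  have hK0n : ‖K0.1‖ ≤ ρ := hnorms K0
  have hK0b : 2 * bb * ‖K0.1‖ ≤ d := by nlinarith
  refine ⟨⟨K0.1, ⟨hK0b, hK0eq⟩, ?_⟩, ?_⟩
  · rintro K ⟨hKb, hKeq⟩
    exact diffzero K K0.1 hKeq hK0eq (solbound K hKb hKeq) hK0n
  · intro K hKb hKeq
    exact solbound K hKb hKeq

theorem sylv_transfer {H0 H1 : Type*}
    [NormedAddCommGroup H0] [InnerProductSpace ℂ H0] [CompleteSpace H0]
    [NormedAddCommGroup H1] [InnerProductSpace ℂ H1] [CompleteSpace H1]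
    (A0 : H0 →L[ℂ] H0) (A1 : H1 →L[ℂ] H1)
    (hA0 : IsSelfAdjoint A0) (hA1 : IsSelfAdjoint A1) (d : ℝ)
    (hS' : ∀ D' : H1 →L[ℂ] H0, (∃ L' : H1 →L[ℂ] H0, L' ∘L A1 - A0 ∘L L' = D') ∧
      ∀ L' : H1 →L[ℂ] H0, L' ∘L A1 - A0 ∘L L' = D' → d * ‖L'‖ ≤ ‖D'‖) :
    ∀ D : H0 →L[ℂ] H1, (∃ L : H0 →L[ℂ] H1, L ∘L A0 - A1 ∘L L = D) ∧
      ∀ L : H0 →L[ℂ] H1, L ∘L A0 - A1 ∘L L = D → d * ‖L‖ ≤ ‖D‖ := by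
  intro D
  have hadj : ∀ L : H0 →L[ℂ] H1,
      ContinuousLinearMap.adjoint (L ∘L A0 - A1 ∘L L)
        = A0 ∘L (ContinuousLinearMap.adjoint L)
          - (ContinuousLinearMap.adjoint L) ∘L A1 := by
    intro L
    rw [map_sub, adjoint_comp, adjoint_comp, hA0.adjoint_eq, hA1.adjoint_eq]
  constructor
  · obtain ⟨L', hL'⟩ := (hS' (- ContinuousLinearMap.adjoint D)).1
    refine ⟨ContinuousLinearMap.adjoint L', ?_⟩
    have step : ContinuousLinearMap.adjoint ((ContinuousLinearMap.adjoint L') ∘L A0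
        - A1 ∘L (ContinuousLinearMap.adjoint L')) = ContinuousLinearMap.adjoint D := by
      rw [hadj, adjoint_adjoint]
      have : A0 ∘L L' - L' ∘L A1 = ContinuousLinearMap.adjoint D := by
        have := congrArg Neg.neg hL'
        rw [neg_neg] at this
        rw [← this]; abel
      exact this
    have := congrArg ContinuousLinearMap.adjoint step
    rwa [adjoint_adjoint, adjoint_adjoint] at this
  · intro L hL
    have h1 : (ContinuousLinearMap.adjoint L) ∘L A1 - A0 ∘L (ContinuousLinearMap.adjoint L)
        = - ContinuousLinearMap.adjoint D := by
      have := hadj L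
      rw [hL] at this
      rw [this]; abel
    have h2 := (hS' _).2 _ h1
    rwa [norm_neg, LinearIsometryEquiv.norm_map, LinearIsometryEquiv.norm_map] at h2

/-- Bounded-operator version of Theorem 4.7 (ii) of the paper: if `A0`, `A1` are bounded
self-adjoint operators with disjoint spectra separated by the distance `d > 0`, the convex
hull (in ℝ) of the (real) spectrum of one of them is disjoint from the spectrum of the
other, and `√(‖B‖‖C‖) < d/2`, then the Riccati equation `K A0 - A1 K + K B K = C` has a
unique bounded solution `K` with `2‖B‖‖K‖ ≤ d`; moreover this solution satisfies
`‖K‖ ≤ ‖C‖ / (d/2 + √(d²/4 - ‖B‖‖C‖))`. -/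
theorem riccati_selfAdjoint_gap_existsUnique
    {H0 : Type*} [NormedAddCommGroup H0] [InnerProductSpace ℂ H0] [CompleteSpace H0]
    {H1 : Type*} [NormedAddCommGroup H1] [InnerProductSpace ℂ H1] [CompleteSpace H1]
    (A0 : H0 →L[ℂ] H0) (A1 : H1 →L[ℂ] H1)
    (hA0 : IsSelfAdjoint A0) (hA1 : IsSelfAdjoint A1)
    (hdisj : spectrum ℂ A0 ∩ spectrum ℂ A1 = ∅)
    (d : ℝ)
    (hd : d = sInf {t : ℝ | ∃ μ ∈ spectrum ℂ A0, ∃ ν ∈ spectrum ℂ A1, t = dist μ ν})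
    (hd0 : 0 < d)
    (hgap :
      Disjoint (convexHull ℝ (Complex.re '' spectrum ℂ A0)) (Complex.re '' spectrum ℂ A1) ∨
      Disjoint (Complex.re '' spectrum ℂ A0) (convexHull ℝ (Complex.re '' spectrum ℂ A1)))
    (B : H1 →L[ℂ] H0) (C : H0 →L[ℂ] H1)
    (hBC : Real.sqrt (‖B‖ * ‖C‖) < d / 2) :
    (∃! K : H0 →L[ℂ] H1,
        2 * ‖B‖ * ‖K‖ ≤ d ∧ K ∘L A0 - A1 ∘L K + (K ∘L B) ∘L K = C) ∧
      ∀ K : H0 →L[ℂ] H1,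
        2 * ‖B‖ * ‖K‖ ≤ d → K ∘L A0 - A1 ∘L K + (K ∘L B) ∘L K = C →
          ‖K‖ ≤ ‖C‖ / (d / 2 + Real.sqrt (d ^ 2 / 4 - ‖B‖ * ‖C‖)) := by
  classical
  have hdd : ∀ μ ∈ spectrum ℂ A0, ∀ ν ∈ spectrum ℂ A1, d ≤ dist μ ν := by
    intro μ hμ ν hν
    rw [hd]
    apply csInf_le
    · refine ⟨0, ?_⟩
      rintro t ⟨μ', _, ν', _, rfl⟩
      exact dist_nonneg
    · exact ⟨μ, hμ, ν, hν, rfl⟩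
  have hBC' : ‖B‖ * ‖C‖ < d ^ 2 / 4 := by
    nlinarith [Real.sq_sqrt (mul_nonneg (norm_nonneg B) (norm_nonneg C)),
      Real.sqrt_nonneg (‖B‖ * ‖C‖), hBC, hd0]
  have hρ0 : 0 ≤ ‖C‖ / (d / 2 + Real.sqrt (d ^ 2 / 4 - ‖B‖ * ‖C‖)) := by
    apply div_nonneg (norm_nonneg C)
    have := Real.sqrt_nonneg (d ^ 2 / 4 - ‖B‖ * ‖C‖)
    linarith
  rcases subsingleton_or_nontrivial H0 with hH0 | hH0
  · haveI : Subsingleton (H0 →L[ℂ] H1) :=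
      ⟨fun f g => by ext x; rw [Subsingleton.elim x 0, map_zero, map_zero]⟩
    refine ⟨⟨0, ⟨by simp [hd0.le], Subsingleton.elim _ _⟩, fun y _ => Subsingleton.elim y 0⟩,
      fun K _ _ => ?_⟩
    rw [Subsingleton.elim K 0]
    simpa using hρ0
  rcases subsingleton_or_nontrivial H1 with hH1 | hH1
  · haveI : Subsingleton (H0 →L[ℂ] H1) :=
      ⟨fun f g => by ext x; exact Subsingleton.elim _ _⟩
    refine ⟨⟨0, ⟨by simp [hd0.le], Subsingleton.elim _ _⟩, fun y _ => Subsingleton.elim y 0⟩,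
      fun K _ _ => ?_⟩
    rw [Subsingleton.elim K 0]
    simpa using hρ0
  rcases hgap with hgap1 | hgap2
  · obtain ⟨c, r, hr, h0n, N, hN1, hN2, hNn⟩ :=
      gap_setup A0 A1 hA0 hA1 d hd0 hdd hgap1
    exact riccati_of_sylvester A0 A1 d hd0 B C
      (fun D => sylv_abstract A0 A1 d hd0 c r hr h0n N hN1 hN2 hNn D) hBC'
  · have hdd' : ∀ μ ∈ spectrum ℂ A1, ∀ ν ∈ spectrum ℂ A0, d ≤ dist μ ν := by
      intro μ hμ ν hν
      rw [dist_comm]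
      exact hdd ν hν μ hμ
    obtain ⟨c, r, hr, h0n, N, hN1, hN2, hNn⟩ :=
      gap_setup A1 A0 hA1 hA0 d hd0 hdd' hgap2.symm
    exact riccati_of_sylvester A0 A1 d hd0 B C
      (sylv_transfer A0 A1 hA0 hA1 d
        (fun D' => sylv_abstract A1 A0 d hd0 c r hr h0n N hN1 hN2 hNn D')) hBC'
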